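/- Let R be a nontrivial commutative ring equipped with an iterative derivation {∂_i}_{i ≥ 0} such that the ID-ring (R, {∂_i}) is simple. Let M be a finitely generated R-module equipped with an iterative connection {∇_i}_{i ≥ 0} over (R, {∂_i}), and let N ⊆ M be an R-submodule with ∇_i(N) ⊆ N for all i (an ID-submodule). Then both N and the quotient M/N are projective R-modules. (The assertion of the paper's Proposition that all ID-subquotients of a finitely generated ID-module over a simple ID-ring are projective.) -/

import Mathlib

open Finset in
lemma sum_AD_assoc {A : Type*} [AddCommMonoid A] (n : ℕ) (F : ℕ → ℕ → ℕ → A) :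
    ∑ ab ∈ antidiagonal n, ∑ xy ∈ antidiagonal ab.1, F xy.1 xy.2 ab.2
    = ∑ xs ∈ antidiagonal n, ∑ yb ∈ antidiagonal xs.2, F xs.1 yb.1 yb.2 := by
  rw [Finset.sum_sigma', Finset.sum_sigma']
  refine Finset.sum_nbij' (i := fun p => ⟨(p.2.1, p.2.2 + p.1.2), (p.2.2, p.1.2)⟩)
    (j := fun p => ⟨(p.1.1 + p.2.1, p.2.2), (p.1.1, p.2.1)⟩) ?_ ?_ ?_ ?_ ?_
  · rintro ⟨⟨a, b⟩, ⟨x, y⟩⟩ hm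
    simp only [mem_sigma, Finset.HasAntidiagonal.mem_antidiagonal, and_true] at hm ⊢; omega
  · rintro ⟨⟨a, b⟩, ⟨x, y⟩⟩ hm
    simp only [mem_sigma, Finset.HasAntidiagonal.mem_antidiagonal, and_true] at hm ⊢; omega
  · rintro ⟨⟨a, b⟩, ⟨x, y⟩⟩ hm
    simp only [mem_sigma, Finset.HasAntidiagonal.mem_antidiagonal] at hm
    obtain ⟨h1, h2⟩ := hm; subst h2; rfl
  · rintro ⟨⟨a, b⟩, ⟨x, y⟩⟩ hm
    simp only [mem_sigma, Finset.HasAntidiagonal.mem_antidiagonal] at hm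
    obtain ⟨h1, h2⟩ := hm; subst h2; rfl
  · rintro ⟨⟨a, b⟩, ⟨x, y⟩⟩ _; rfl

open Finset in
lemma sum_AD_shuffle {A : Type*} [AddCommMonoid A] (c : ℕ) (F : ℕ → ℕ → ℕ → ℕ → A) :
    ∑ pb ∈ antidiagonal c, ∑ y ∈ antidiagonal pb.1, ∑ z ∈ antidiagonal pb.2,
        F y.1 y.2 z.1 z.2
    = ∑ wz ∈ antidiagonal c, ∑ y ∈ antidiagonal wz.1, ∑ z ∈ antidiagonal wz.2,
        F y.1 z.1 y.2 z.2 := by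
  simp_rw [← Finset.sum_product']
  rw [Finset.sum_sigma', Finset.sum_sigma']
  refine Finset.sum_nbij'
    (i := fun p => ⟨(p.2.1.1 + p.2.2.1, p.2.1.2 + p.2.2.2), ((p.2.1.1, p.2.2.1), (p.2.1.2, p.2.2.2))⟩)
    (j := fun p => ⟨(p.2.1.1 + p.2.2.1, p.2.1.2 + p.2.2.2), ((p.2.1.1, p.2.2.1), (p.2.1.2, p.2.2.2))⟩)
    ?_ ?_ ?_ ?_ ?_
  · rintro ⟨⟨p, b⟩, ⟨⟨p1, p2⟩, ⟨u, v⟩⟩⟩ hm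
    simp only [mem_sigma, mem_product, Finset.HasAntidiagonal.mem_antidiagonal, and_true] at hm ⊢; omega
  · rintro ⟨⟨w, z⟩, ⟨⟨p1, u⟩, ⟨p2, v⟩⟩⟩ hm
    simp only [mem_sigma, mem_product, Finset.HasAntidiagonal.mem_antidiagonal, and_true] at hm ⊢; omega
  · rintro ⟨⟨p, b⟩, ⟨⟨p1, p2⟩, ⟨u, v⟩⟩⟩ hm
    simp only [mem_sigma, mem_product, Finset.HasAntidiagonal.mem_antidiagonal] at hm
    obtain ⟨h1, h2, h3⟩ := hm; subst h2; subst h3; rfl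
  · rintro ⟨⟨w, z⟩, ⟨⟨p1, u⟩, ⟨p2, v⟩⟩⟩ hm
    simp only [mem_sigma, mem_product, Finset.HasAntidiagonal.mem_antidiagonal] at hm
    obtain ⟨h1, h2, h3⟩ := hm; subst h2; subst h3; rfl
  · rintro ⟨⟨p, b⟩, ⟨⟨p1, p2⟩, ⟨u, v⟩⟩⟩ _; rfl

open Finset in
lemma alt_choose_sum (R : Type*) [CommRing R] (s : ℕ) :
    ∑ qb ∈ antidiagonal s, (-1 : R) ^ qb.2 * (s.choose qb.1 : R)
    = if s = 0 then 1 else 0 := by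
  rw [Finset.Nat.sum_antidiagonal_eq_sum_range_succ_mk]
  have key : ∀ k ∈ Finset.range (s + 1), (-1 : R) ^ (s - k) * (s.choose k : R)
      = (-1 : R) ^ s * ((-1 : R) ^ k * (s.choose k : R)) := by
    intro k hk
    rw [Finset.mem_range] at hk
    have h1 : (-1 : R) ^ (s - k) * (-1 : R) ^ k = (-1 : R) ^ s := by
      rw [← pow_add]; congr 1; omega
    have h2 : (-1 : R) ^ k * (-1 : R) ^ k = 1 := by
      rw [← pow_add, ← two_mul, pow_mul]; simp
    calc (-1 : R) ^ (s - k) * (s.choose k : R)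
        = ((-1 : R) ^ (s - k) * (-1 : R) ^ k) * ((-1:R)^k * (s.choose k : R)) := by
          rw [← mul_assoc, mul_assoc _ _ ((-1:R)^k), h2]; ring
      _ = (-1 : R) ^ s * ((-1 : R) ^ k * (s.choose k : R)) := by rw [h1]
  rw [Finset.sum_congr rfl key, ← Finset.mul_sum]
  have hz : ∑ k ∈ Finset.range (s + 1), (-1 : R) ^ k * (s.choose k : R)
      = if s = 0 then 1 else 0 := by
    have := Int.alternating_sum_range_choose (n := s)
    have := congrArg (fun z : ℤ => (z : R)) this
    push_cast at this
    convert this using 2 <;> simp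
  rw [hz]
  by_cases h : s = 0 <;> simp [h]

open Finset

section
variable {R : Type*} [CommRing R] (d : ℕ → R →+ R)
  (h0 : ∀ r : R, d 0 r = r)
  (hmul : ∀ (i : ℕ) (r s : R),
      d i (r * s) = ∑ p ∈ Finset.HasAntidiagonal.antidiagonal i, d p.1 r * d p.2 s)

include h0 hmul in
lemma d_one_eq_zero : ∀ i : ℕ, i ≠ 0 → d i (1 : R) = 0 := by
  intro i
  induction i using Nat.strong_induction_on with
  | _ i ih =>
    intro hi
    have h := hmul i 1 1
    rw [mul_one] at h
    rw [Finset.Nat.sum_antidiagonal_eq_sum_range_succ_mk] at h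
    have hsplit : ∀ k ∈ Finset.range (i + 1),
        d k (1:R) * d (i - k) (1:R)
        = (if k = 0 then d i (1:R) else 0) + (if k = i then d i (1:R) else 0) := by
      intro k hk
      rw [Finset.mem_range] at hk
      by_cases hk0 : k = 0
      · subst hk0
        simp [h0, Ne.symm hi]
      · by_cases hki : k = i
        · subst hki
          simp [h0, hk0, Nat.sub_self]
        · have : d k (1:R) = 0 := ih k (by omega) hk0
          simp [this, hk0, hki]
    rw [Finset.sum_congr rfl hsplit, Finset.sum_add_distrib] at h
    rw [Finset.sum_ite_eq' (Finset.range (i+1)) 0, Finset.sum_ite_eq' (Finset.range (i+1)) i] at h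
    simp only [Finset.mem_range, Nat.lt_succ_iff, Nat.zero_le, if_true, le_refl] at h
    -- h : d i 1 = d i 1 + d i 1
    have h2 : d i (1:R) + 0 = d i (1:R) + d i (1:R) := by rw [add_zero]; exact h
    exact (add_left_cancel h2).symm
end

section
variable {R : Type*} [CommRing R] (d : ℕ → R →+ R)
  (h0 : ∀ r : R, d 0 r = r)
  (hmul : ∀ (i : ℕ) (r s : R),
      d i (r * s) = ∑ p ∈ Finset.HasAntidiagonal.antidiagonal i, d p.1 r * d p.2 s)

include h0 hmul in
lemma d_nilpotent (x : R) (hx : IsNilpotent x) : ∀ i : ℕ, d i x ∈ nilradical R := by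
  intro i
  induction i using Nat.strong_induction_on with
  | _ i ih =>
    rcases Nat.eq_zero_or_pos i with hi | hi
    · subst hi; rw [h0]; exact hx
    obtain ⟨k0, hk0⟩ := hx
    have hxk : x ^ (k0 + 1) = 0 := by rw [pow_succ, hk0, zero_mul]
    set k := k0 + 1 with hk
    set S : Ideal R := Ideal.span {y | ∃ j < i, y = d j x} with hS
    have hSnil : S ≤ nilradical R := by
      rw [hS, Ideal.span_le]
      rintro y ⟨j, hj, rfl⟩
      exact ih j hj
    have hgen : ∀ j < i, d j x ∈ S := fun j hj =>
      Ideal.subset_span ⟨j, hj, rfl⟩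
    -- Lemma B
    have lemB : ∀ m : ℕ, ∀ q < i * m, d q (x ^ m) ∈ S := by
      intro m
      induction m with
      | zero => intro q hq; omega
      | succ m ihm =>
        intro q hq
        have hh : i * (m+1) = i * m + i := by ring
        rw [pow_succ, mul_comm (x ^ m) x, hmul q x (x ^ m)]
        refine Ideal.sum_mem S ?_
        rintro ⟨p, p'⟩ hp
        rw [Finset.HasAntidiagonal.mem_antidiagonal] at hp
        by_cases hpi : p < i
        · exact Ideal.mul_mem_right _ S (hgen p hpi)
        · exact Ideal.mul_mem_left _ _ (ihm p' (by omega))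
    -- Lemma A
    have lemA : ∀ m : ℕ, d (i * m) (x ^ m) - (d i x) ^ m ∈ S := by
      intro m
      induction m with
      | zero =>
        simp only [Nat.mul_zero, pow_zero, h0, sub_self]
        exact S.zero_mem
      | succ m ihm =>
        have hh : i * (m+1) = i * m + i := by ring
        have hmem : ((i, i * m) : ℕ × ℕ) ∈ Finset.HasAntidiagonal.antidiagonal (i * (m + 1)) := by
          rw [Finset.HasAntidiagonal.mem_antidiagonal]; ring
        rw [pow_succ, mul_comm (x ^ m) x, hmul (i * (m+1)) x (x ^ m)]
        rw [← Finset.add_sum_erase _ _ hmem]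
        have hrest : ∑ p ∈ (Finset.HasAntidiagonal.antidiagonal (i * (m+1))).erase (i, i * m),
            d p.1 x * d p.2 (x ^ m) ∈ S := by
          refine Ideal.sum_mem S ?_
          rintro ⟨p, p'⟩ hp
          rw [Finset.mem_erase, Finset.HasAntidiagonal.mem_antidiagonal] at hp
          obtain ⟨hne, hsum⟩ := hp
          by_cases hpi : p < i
          · exact Ideal.mul_mem_right _ S (hgen p hpi)
          · have hpgt : p > i := by
              rcases Nat.lt_or_ge i p with h' | h'
              · exact h'
              · exfalso; have : p = i := by omega
                apply hne; simp [this]; omega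
            exact Ideal.mul_mem_left _ _ (lemB m p' (by omega))
        have hfirst : d i x * d (i * m) (x ^ m) - d i x * (d i x) ^ m ∈ S := by
          rw [← mul_sub]
          exact Ideal.mul_mem_left _ _ ihm
        have : d i x * d (i * m) (x ^ m) +
            (∑ p ∈ (Finset.HasAntidiagonal.antidiagonal (i * (m+1))).erase (i, i * m),
              d p.1 x * d p.2 (x ^ m)) - (d i x) ^ (m + 1)
            = (d i x * d (i * m) (x ^ m) - d i x * (d i x) ^ m) +
              (∑ p ∈ (Finset.HasAntidiagonal.antidiagonal (i * (m+1))).erase (i, i * m),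
                d p.1 x * d p.2 (x ^ m)) := by
          rw [pow_succ]; ring
        rw [this]
        exact S.add_mem hfirst hrest
    have h1 : d (i * k) (x ^ k) = 0 := by rw [hxk, map_zero]
    have h2 : (0 : R) - (d i x) ^ k ∈ S := by rw [← h1]; exact lemA k
    have h3 : (d i x) ^ k ∈ nilradical R := by
      have : -((d i x) ^ k) ∈ S := by simpa using h2
      have : (d i x) ^ k ∈ S := by simpa using S.neg_mem this
      exact hSnil this
    rw [mem_nilradical] at h3 ⊢
    obtain ⟨m, hm⟩ := h3
    exact ⟨k * m, by rw [pow_mul]; exact hm⟩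
end

section
variable {R : Type*} [CommRing R] (d : ℕ → R →+ R)
  (h0 : ∀ r : R, d 0 r = r)
  (hmul : ∀ (i : ℕ) (r s : R),
      d i (r * s) = ∑ p ∈ Finset.HasAntidiagonal.antidiagonal i, d p.1 r * d p.2 s)
  (hcomp : ∀ (i j : ℕ) (r : R), d i (d j r) = (i + j).choose i • d (i + j) r)
  {M : Type*} [AddCommGroup M] [Module R M] (Dm : ℕ → M →+ M)
  (hDm0 : ∀ m : M, Dm 0 m = m)
  (hDmsmul : ∀ (i : ℕ) (r : R) (m : M),
      Dm i (r • m) = ∑ p ∈ Finset.HasAntidiagonal.antidiagonal i, d p.1 r • Dm p.2 m)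
  (hDmcomp : ∀ (i j : ℕ) (m : M), Dm i (Dm j m) = (i + j).choose i • Dm (i + j) m)

include hDm0 hDmsmul hDmcomp in
lemma claim1 (t : ℕ) (r : R) (m : M) :
    d t r • m = ∑ ab ∈ Finset.HasAntidiagonal.antidiagonal t, (-1:R)^ab.2 • Dm ab.1 (r • Dm ab.2 m) := by
  have step : ∀ ab ∈ Finset.HasAntidiagonal.antidiagonal t, (-1:R)^ab.2 • Dm ab.1 (r • Dm ab.2 m)
      = ∑ pq ∈ Finset.HasAntidiagonal.antidiagonal ab.1,
          (-1:R)^ab.2 • (d pq.1 r • ((((pq.2 + ab.2).choose pq.2 : ℕ) : R) • Dm (pq.2 + ab.2) m)) := by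
    intro ab _
    rw [hDmsmul ab.1 r (Dm ab.2 m), Finset.smul_sum]
    refine Finset.sum_congr rfl fun pq _ => ?_
    rw [hDmcomp pq.2 ab.2 m, Nat.cast_smul_eq_nsmul]
  rw [Finset.sum_congr rfl step,
    sum_AD_assoc t (fun x y b => (-1:R)^b • (d x r • ((((y + b).choose y : ℕ) : R) • Dm (y + b) m)))]
  have step2 : ∀ xs ∈ Finset.HasAntidiagonal.antidiagonal t,
      (∑ yb ∈ Finset.HasAntidiagonal.antidiagonal xs.2,
        (-1:R)^yb.2 • (d xs.1 r • ((((yb.1 + yb.2).choose yb.1 : ℕ) : R) • Dm (yb.1 + yb.2) m)))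
      = (if xs.2 = 0 then (1:R) else 0) • (d xs.1 r • Dm xs.2 m) := by
    intro xs _
    have inner : ∀ yb ∈ Finset.HasAntidiagonal.antidiagonal xs.2,
        (-1:R)^yb.2 • (d xs.1 r • ((((yb.1 + yb.2).choose yb.1 : ℕ) : R) • Dm (yb.1 + yb.2) m))
        = ((-1:R)^yb.2 * ((xs.2.choose yb.1 : ℕ) : R)) • (d xs.1 r • Dm xs.2 m) := by
      rintro ⟨y, b⟩ hyb
      rw [Finset.HasAntidiagonal.mem_antidiagonal] at hyb
      simp only
      rw [hyb]
      rw [smul_comm (d xs.1 r), smul_smul, smul_smul]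
    rw [Finset.sum_congr rfl inner, ← Finset.sum_smul, alt_choose_sum]
  rw [Finset.sum_congr rfl step2]
  rw [Finset.sum_eq_single_of_mem ((t, 0) : ℕ × ℕ) (by rw [Finset.HasAntidiagonal.mem_antidiagonal]; omega)]
  · simp [hDm0]
  · rintro ⟨a, b⟩ hab hne
    rw [Finset.HasAntidiagonal.mem_antidiagonal] at hab
    have : b ≠ 0 := by
      rintro rfl
      exact hne (by simp at hab ⊢; omega)
    simp [this]
end

section
variable {R : Type*} [CommRing R] (d : ℕ → R →+ R)
  (h0 : ∀ r : R, d 0 r = r)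
  (hmul : ∀ (i : ℕ) (r s : R),
      d i (r * s) = ∑ p ∈ Finset.HasAntidiagonal.antidiagonal i, d p.1 r * d p.2 s)
  (hcomp : ∀ (i j : ℕ) (r : R), d i (d j r) = (i + j).choose i • d (i + j) r)
  {M : Type*} [AddCommGroup M] [Module R M] (Dm : ℕ → M →+ M)
  (hDmsmul : ∀ (i : ℕ) (r : R) (m : M),
      Dm i (r • m) = ∑ p ∈ Finset.HasAntidiagonal.antidiagonal i, d p.1 r • Dm p.2 m)

include h0 hmul hcomp hDmsmul in
lemma Flin (c : ℕ) (g : M →ₗ[R] R) (r : R) (m : M) :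
    (∑ pb ∈ Finset.HasAntidiagonal.antidiagonal c, (-1:R)^pb.2 * d pb.1 (g (Dm pb.2 (r • m))))
    = r * ∑ pb ∈ Finset.HasAntidiagonal.antidiagonal c, (-1:R)^pb.2 * d pb.1 (g (Dm pb.2 m)) := by
  have step : ∀ pb ∈ Finset.HasAntidiagonal.antidiagonal c, (-1:R)^pb.2 * d pb.1 (g (Dm pb.2 (r • m)))
      = ∑ y ∈ Finset.HasAntidiagonal.antidiagonal pb.1, ∑ z ∈ Finset.HasAntidiagonal.antidiagonal pb.2,
          (-1:R)^(z.1+z.2) * ((((y.1+z.1).choose y.1 : ℕ):R) * d (y.1+z.1) r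
            * d y.2 (g (Dm z.2 m))) := by
    rintro ⟨p, b⟩ hpb
    simp only
    calc (-1:R)^b * d p (g (Dm b (r • m)))
        = ∑ uv ∈ Finset.HasAntidiagonal.antidiagonal b, (-1:R)^b * d p (d uv.1 r * g (Dm uv.2 m)) := by
          rw [hDmsmul b r m, map_sum, map_sum, Finset.mul_sum]
          refine Finset.sum_congr rfl fun uv _ => ?_
          rw [map_smul, smul_eq_mul]
      _ = ∑ uv ∈ Finset.HasAntidiagonal.antidiagonal b, ∑ p12 ∈ Finset.HasAntidiagonal.antidiagonal p,
            (-1:R)^(uv.1+uv.2) * ((((p12.1+uv.1).choose p12.1 : ℕ):R) * d (p12.1+uv.1) r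
              * d p12.2 (g (Dm uv.2 m))) := by
          refine Finset.sum_congr rfl fun uv huv => ?_
          rw [Finset.HasAntidiagonal.mem_antidiagonal] at huv
          rw [hmul p (d uv.1 r) (g (Dm uv.2 m)), Finset.mul_sum, ← huv]
          refine Finset.sum_congr rfl fun p12 _ => ?_
          rw [hcomp p12.1 uv.1 r, nsmul_eq_mul]
      _ = ∑ y ∈ Finset.HasAntidiagonal.antidiagonal p, ∑ z ∈ Finset.HasAntidiagonal.antidiagonal b,
            (-1:R)^(z.1+z.2) * ((((y.1+z.1).choose y.1 : ℕ):R) * d (y.1+z.1) r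
              * d y.2 (g (Dm z.2 m))) := Finset.sum_comm
  rw [Finset.sum_congr rfl step,
    sum_AD_shuffle c (fun A B U V => (-1:R)^(U+V) * ((((A+U).choose A : ℕ):R) * d (A+U) r
      * d B (g (Dm V m))))]
  have step2 : ∀ wz ∈ Finset.HasAntidiagonal.antidiagonal c,
      (∑ y ∈ Finset.HasAntidiagonal.antidiagonal wz.1, ∑ z ∈ Finset.HasAntidiagonal.antidiagonal wz.2,
        (-1:R)^(y.2+z.2) * ((((y.1+y.2).choose y.1 : ℕ):R) * d (y.1+y.2) r
          * d z.1 (g (Dm z.2 m))))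
      = (if wz.1 = 0 then (1:R) else 0) *
          ∑ z ∈ Finset.HasAntidiagonal.antidiagonal wz.2, (-1:R)^z.2 * (d wz.1 r * d z.1 (g (Dm z.2 m))) := by
    rintro ⟨w, zz⟩ _
    simp only
    have inner : ∀ y ∈ Finset.HasAntidiagonal.antidiagonal w,
        (∑ z ∈ Finset.HasAntidiagonal.antidiagonal zz,
          (-1:R)^(y.2+z.2) * ((((y.1+y.2).choose y.1 : ℕ):R) * d (y.1+y.2) r
            * d z.1 (g (Dm z.2 m))))
        = ((-1:R)^y.2 * ((w.choose y.1 : ℕ):R)) *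
            ∑ z ∈ Finset.HasAntidiagonal.antidiagonal zz, (-1:R)^z.2 * (d w r * d z.1 (g (Dm z.2 m))) := by
      rintro ⟨y1, y2⟩ hy
      rw [Finset.HasAntidiagonal.mem_antidiagonal] at hy
      simp only
      rw [hy, Finset.mul_sum]
      refine Finset.sum_congr rfl fun z _ => ?_
      rw [pow_add]
      ring
    rw [Finset.sum_congr rfl inner, ← Finset.sum_mul, alt_choose_sum]
  rw [Finset.sum_congr rfl step2]
  rw [Finset.sum_eq_single_of_mem ((0, c) : ℕ × ℕ)
    (by rw [Finset.HasAntidiagonal.mem_antidiagonal]; omega)]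
  · rw [if_pos rfl, one_mul, Finset.mul_sum]
    refine Finset.sum_congr rfl fun z _ => ?_
    rw [h0]
    ring
  · rintro ⟨a, b⟩ hab hne
    rw [Finset.HasAntidiagonal.mem_antidiagonal] at hab
    have : a ≠ 0 := by
      rintro rfl
      exact hne (by simp at hab ⊢; omega)
    simp [this]
end

section
variable {R : Type*} [CommRing R] (d : ℕ → R →+ R)
  (h0 : ∀ r : R, d 0 r = r)
  (hmul : ∀ (i : ℕ) (r s : R),
      d i (r * s) = ∑ p ∈ Finset.HasAntidiagonal.antidiagonal i, d p.1 r * d p.2 s)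
  (hcomp : ∀ (i j : ℕ) (r : R), d i (d j r) = (i + j).choose i • d (i + j) r)
  {M : Type*} [AddCommGroup M] [Module R M] (Dm : ℕ → M →+ M)
  (hDm0 : ∀ m : M, Dm 0 m = m)
  (hDmsmul : ∀ (i : ℕ) (r : R) (m : M),
      Dm i (r • m) = ∑ p ∈ Finset.HasAntidiagonal.antidiagonal i, d p.1 r • Dm p.2 m)
  (hDmcomp : ∀ (i j : ℕ) (m : M), Dm i (Dm j m) = (i + j).choose i • Dm (i + j) m)

include h0 hmul hcomp hDm0 hDmsmul hDmcomp in
lemma Jstab (t : ℕ) (r : R)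
    (hr : ∃ (ι : Type) (_ : Fintype ι) (f : ι → (M →ₗ[R] R)) (x : ι → M),
      ∀ m, r • m = ∑ i, f i m • x i) :
    ∃ (ι : Type) (_ : Fintype ι) (f : ι → (M →ₗ[R] R)) (x : ι → M),
      ∀ m, d t r • m = ∑ i, f i m • x i := by
  obtain ⟨ι, _, f, x, hfx⟩ := hr
  -- the twisted functionals
  have Fadd : ∀ (i : ι) (c : ℕ) (m1 m2 : M),
      (∑ pb ∈ Finset.HasAntidiagonal.antidiagonal c, (-1:R)^pb.2 * d pb.1 (f i (Dm pb.2 (m1 + m2))))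
      = (∑ pb ∈ Finset.HasAntidiagonal.antidiagonal c, (-1:R)^pb.2 * d pb.1 (f i (Dm pb.2 m1)))
        + ∑ pb ∈ Finset.HasAntidiagonal.antidiagonal c, (-1:R)^pb.2 * d pb.1 (f i (Dm pb.2 m2)) := by
    intro i c m1 m2
    rw [← Finset.sum_add_distrib]
    refine Finset.sum_congr rfl fun pb _ => ?_
    rw [map_add, map_add, map_add, mul_add]
  set Fc : ι → ℕ → (M →ₗ[R] R) := fun i c =>
    { toFun := fun m => ∑ pb ∈ Finset.HasAntidiagonal.antidiagonal c, (-1:R)^pb.2 * d pb.1 (f i (Dm pb.2 m))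
      map_add' := Fadd i c
      map_smul' := fun r' m => by
        simpa using Flin d h0 hmul hcomp Dm hDmsmul c (f i) r' m } with hFc
  have main : ∀ m : M, d t r • m = ∑ i : ι, ∑ xs ∈ Finset.HasAntidiagonal.antidiagonal t,
      Fc i xs.2 m • Dm xs.1 (x i) := by
    intro m
    rw [claim1 d Dm hDm0 hDmsmul hDmcomp t r m]
    have step : ∀ ab ∈ Finset.HasAntidiagonal.antidiagonal t,
        (-1:R)^ab.2 • Dm ab.1 (r • Dm ab.2 m)
        = ∑ i : ι, ∑ pq ∈ Finset.HasAntidiagonal.antidiagonal ab.1,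
            ((-1:R)^ab.2 * d pq.1 (f i (Dm ab.2 m))) • Dm pq.2 (x i) := by
      intro ab _
      rw [hfx (Dm ab.2 m), map_sum, Finset.smul_sum]
      refine Finset.sum_congr rfl fun i _ => ?_
      rw [hDmsmul ab.1 (f i (Dm ab.2 m)) (x i), Finset.smul_sum]
      refine Finset.sum_congr rfl fun pq _ => ?_
      rw [smul_smul]
    rw [Finset.sum_congr rfl step, Finset.sum_comm]
    refine Finset.sum_congr rfl fun i _ => ?_
    have swap : ∀ ab ∈ Finset.HasAntidiagonal.antidiagonal t,
        (∑ pq ∈ Finset.HasAntidiagonal.antidiagonal ab.1,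
          ((-1:R)^ab.2 * d pq.1 (f i (Dm ab.2 m))) • Dm pq.2 (x i))
        = ∑ pq ∈ Finset.HasAntidiagonal.antidiagonal ab.1,
          ((-1:R)^ab.2 * d pq.2 (f i (Dm ab.2 m))) • Dm pq.1 (x i) := by
      intro ab _
      have hsw := Finset.Nat.sum_antidiagonal_swap (n := ab.1)
        (f := fun pq => ((-1:R)^ab.2 * d pq.2 (f i (Dm ab.2 m))) • Dm pq.1 (x i))
      simp only [Prod.fst_swap, Prod.snd_swap] at hsw
      exact hsw
    rw [Finset.sum_congr rfl swap,
      sum_AD_assoc t (fun X Y B => ((-1:R)^B * d Y (f i (Dm B m))) • Dm X (x i))]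
    refine Finset.sum_congr rfl fun xs _ => ?_
    rw [hFc]
    simp only [LinearMap.coe_mk, AddHom.coe_mk]
    rw [Finset.sum_smul]
  refine ⟨ι × Fin (t+1), inferInstance, fun ik => Fc ik.1 (t - ik.2.1),
    fun ik => Dm ik.2.1 (x ik.1), fun m => ?_⟩
  rw [main m, Fintype.sum_prod_type]
  refine Finset.sum_congr rfl fun i _ => ?_
  rw [Finset.Nat.sum_antidiagonal_eq_sum_range_succ_mk
    (fun xs => Fc i xs.2 m • Dm xs.1 (x i)) t, Finset.sum_range]
end

universe u v

theorem idm_projective {R : Type u} [CommRing R] [Nontrivial R]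
    (d : ℕ → R →+ R)
    (h0 : ∀ r : R, d 0 r = r)
    (hmul : ∀ (i : ℕ) (r s : R),
      d i (r * s) = ∑ p ∈ Finset.HasAntidiagonal.antidiagonal i, d p.1 r * d p.2 s)
    (hcomp : ∀ (i j : ℕ) (r : R), d i (d j r) = (i + j).choose i • d (i + j) r)
    (hsimple : ∀ I : Ideal R, (∀ (i : ℕ), ∀ x ∈ I, d i x ∈ I) → I = ⊥ ∨ I = ⊤)
    {M : Type v} [AddCommGroup M] [Module R M] [Module.Finite R M]
    (Dm : ℕ → M →+ M)
    (hDm0 : ∀ m : M, Dm 0 m = m)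
    (hDmsmul : ∀ (i : ℕ) (r : R) (m : M),
      Dm i (r • m) = ∑ p ∈ Finset.HasAntidiagonal.antidiagonal i, d p.1 r • Dm p.2 m)
    (hDmcomp : ∀ (i j : ℕ) (m : M), Dm i (Dm j m) = (i + j).choose i • Dm (i + j) m) :
    Module.Projective R M := by
  classical
  -- R is reduced
  have hred : ∀ δ : R, δ * δ = 0 → δ = 0 := by
    have hnil : nilradical R = ⊥ := by
      rcases hsimple (nilradical R)
        (fun i x hx => d_nilpotent d h0 hmul x (mem_nilradical.mp hx) i) with h | h
      · exact h
      · exfalso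
        have h1 : (1 : R) ∈ nilradical R := h ▸ Submodule.mem_top
        obtain ⟨k, hk⟩ := mem_nilradical.mp h1
        rw [one_pow] at hk
        exact one_ne_zero hk
    intro δ hδ
    have : δ ∈ nilradical R := mem_nilradical.mpr ⟨2, by rw [pow_two]; exact hδ⟩
    rw [hnil] at this
    exact (Submodule.mem_bot R).mp this
  -- the dual-basis ideal J
  let J : Ideal R :=
    { carrier := {r | ∃ (ι : Type) (_ : Fintype ι) (f : ι → (M →ₗ[R] R)) (x : ι → M),
        ∀ m, r • m = ∑ i, f i m • x i}
      zero_mem' := ⟨Fin 0, inferInstance, fun _ => 0, fun _ => 0, fun m => by simp⟩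
      add_mem' := by
        rintro a b ⟨ι1, _, f1, x1, h1⟩ ⟨ι2, _, f2, x2, h2⟩
        refine ⟨ι1 ⊕ ι2, inferInstance, Sum.elim f1 f2, Sum.elim x1 x2, fun m => ?_⟩
        rw [Fintype.sum_sum_type]
        simp only [Sum.elim_inl, Sum.elim_inr]
        rw [add_smul, h1 m, h2 m]
      smul_mem' := by
        rintro c r ⟨ι, _, f, x, h⟩
        refine ⟨ι, inferInstance, fun i => c • f i, x, fun m => ?_⟩
        rw [smul_eq_mul, mul_smul, h m, Finset.smul_sum]
        refine Finset.sum_congr rfl fun i _ => ?_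
        rw [LinearMap.smul_apply, smul_eq_mul, mul_smul] }
  have hJmem : ∀ r : R, r ∈ J ↔ ∃ (ι : Type) (_ : Fintype ι) (f : ι → (M →ₗ[R] R)) (x : ι → M),
      ∀ m, r • m = ∑ i, f i m • x i := fun r => Iff.rfl
  have hJstable : ∀ i : ℕ, ∀ r ∈ J, d i r ∈ J := fun i r hr =>
    Jstab d h0 hmul hcomp Dm hDm0 hDmsmul hDmcomp i r hr
  -- generators
  obtain ⟨n, s, hs⟩ := Module.Finite.exists_fin (R := R) (M := M)
  let pi : (Fin n → R) →ₗ[R] M :=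
    { toFun := fun u => ∑ c, u c • s c
      map_add' := fun u1 u2 => by
        simp only [Pi.add_apply, add_smul, Finset.sum_add_distrib]
      map_smul' := fun r u => by
        simp only [RingHom.id_apply, Finset.smul_sum, Pi.smul_apply, smul_eq_mul, mul_smul] }
  have hpi : ∀ u : Fin n → R, pi u = ∑ c, u c • s c := fun u => rfl
  have hpisurj : ∀ m : M, ∃ u, pi u = m := by
    intro m
    have hm : m ∈ Submodule.span R (Set.range s) := hs ▸ Submodule.mem_top
    obtain ⟨u, hu⟩ := (Submodule.mem_span_range_iff_exists_fun R).mp hm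
    exact ⟨u, hu⟩
  have hpisingle : ∀ c : Fin n, pi (Pi.single c 1) = s c := by
    intro c
    rw [hpi]
    rw [Finset.sum_eq_single_of_mem c (Finset.mem_univ c)]
    · rw [Pi.single_eq_same, one_smul]
    · intro b _ hb
      rw [Pi.single_eq_of_ne hb, zero_smul]
  -- minors
  let minorSet : ℕ → Set R := fun j =>
    {r | ∃ (v : Fin j → LinearMap.ker pi) (cs : Fin j → Fin n),
      r = Matrix.det (Matrix.of fun a b => ((v a : Fin n → R) (cs b)))}
  let I : ℕ → Ideal R := fun j => Ideal.span (minorSet j)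
  let e := Nat.findGreatest (fun j => I j ≠ ⊥) n
  have heTop : I (e + 1) = ⊥ := by
    by_cases he : e + 1 ≤ n
    · have := Nat.findGreatest_is_greatest
        (P := fun j => I j ≠ ⊥) (n := n) (k := e + 1) (by omega) he
      exact not_not.mp this
    · have hen : n < e + 1 := by omega
      rw [show I (e+1) = Ideal.span (minorSet (e+1)) from rfl, Ideal.span_eq_bot]
      rintro r ⟨v, cs, rfl⟩
      have hcard : Fintype.card (Fin n) < Fintype.card (Fin (e+1)) := by
        simpa using (by omega : n < e + 1)
      obtain ⟨b1, b2, hb, hcs⟩ := Fintype.exists_ne_map_eq_of_card_lt cs hcard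
      exact Matrix.det_zero_of_column_eq hb (fun k => by simp [hcs])
  rcases Nat.eq_zero_or_pos e with he0 | hepos
  · -- kernel is trivial: M is free
    have hI1 : I 1 = ⊥ := by rw [he0] at heTop; simpa using heTop
    have hker : ∀ z : Fin n → R, pi z = 0 → z = 0 := by
      intro z hz
      funext c
      have hmem : z c ∈ minorSet 1 :=
        ⟨fun _ => ⟨z, LinearMap.mem_ker.mpr hz⟩, fun _ => c, by
          rw [Matrix.det_fin_one]; rfl⟩
      have : z c ∈ I 1 := Ideal.subset_span hmem
      rw [hI1] at this
      exact (Submodule.mem_bot R).mp this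
    have hinj : Function.Injective pi := by
      rw [← LinearMap.ker_eq_bot]
      exact LinearMap.ker_eq_bot'.mpr hker
    exact Module.Projective.of_equiv
      (LinearEquiv.ofBijective pi ⟨hinj, fun m => hpisurj m⟩)
  · -- main case: find a nonzero minor
    have hIe : I e ≠ ⊥ :=
      Nat.findGreatest_of_ne_zero (m := e) rfl (by omega)
    have hminor : ∃ r ∈ minorSet e, r ≠ 0 := by
      by_contra hcon
      push_neg at hcon
      exact hIe (Ideal.span_eq_bot.mpr hcon)
    obtain ⟨δ, ⟨v, cs, hdet⟩, hδ0⟩ := hminor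
    set A : Matrix (Fin e) (Fin e) R := Matrix.of (fun a b => ((v a : Fin n → R) (cs b)))
      with hA
    have hcsinj : Function.Injective cs := by
      intro b1 b2 hb
      by_contra hne
      apply hδ0
      rw [hdet]
      refine Matrix.det_zero_of_column_eq hne (fun k => ?_)
      show (v k : Fin n → R) (cs b1) = (v k : Fin n → R) (cs b2)
      rw [hb]
    have huniq : ∀ z : Fin n → R, pi z = 0 → (∀ b, z (cs b) = 0) → ∀ c, δ * z c = 0 := by
      intro z hz hzc c
      by_cases hcr : ∃ b, cs b = c
      · obtain ⟨b, rfl⟩ := hcr; rw [hzc b, mul_zero]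
      · push_neg at hcr
        set w : Fin (e+1) → (Fin n → R) := Fin.snoc (fun a => (v a : Fin n → R)) z with hw
        set cs' : Fin (e+1) → Fin n := Fin.snoc cs c with hcs'
        set B : Matrix (Fin (e+1)) (Fin (e+1)) R := Matrix.of (fun i j => w i (cs' j)) with hB
        have hBmem : B.det ∈ minorSet (e+1) := by
          set zz : LinearMap.ker pi := ⟨z, LinearMap.mem_ker.mpr hz⟩ with hzz
          have hrows : (fun i => (((Fin.snoc v zz : Fin (e+1) → LinearMap.ker pi) i : LinearMap.ker pi) : Fin n → R)) = w := by
            funext i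
            refine Fin.lastCases ?_ (fun a => ?_) i
            · rw [Fin.snoc_last, hw, Fin.snoc_last, hzz]
            · rw [Fin.snoc_castSucc, hw, Fin.snoc_castSucc]
          refine ⟨Fin.snoc v zz, cs', ?_⟩
          have hBeq : (Matrix.of fun a b =>
              (((Fin.snoc v zz : Fin (e+1) → LinearMap.ker pi) a : Fin n → R)) (cs' b)) = B := by
            funext a b
            show (((Fin.snoc v zz : Fin (e+1) → LinearMap.ker pi) a : Fin n → R)) (cs' b)
              = w a (cs' b)
            rw [congrFun hrows a]
          rw [hBeq]
        have hB0 : B.det = 0 := by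
          have hmm := Ideal.subset_span hBmem
          rw [show Ideal.span (minorSet (e+1)) = I (e+1) from rfl, heTop] at hmm
          exact (Submodule.mem_bot R).mp hmm
        have hdetB : B.det = z c * δ := by
          rw [Matrix.det_succ_row B (Fin.last e)]
          rw [Finset.sum_eq_single_of_mem (Fin.last e) (Finset.mem_univ _)]
          · have h1 : B (Fin.last e) (Fin.last e) = z c := by
              show w (Fin.last e) (cs' (Fin.last e)) = z c
              rw [hw, hcs', Fin.snoc_last, Fin.snoc_last]
            have h2 : (B.submatrix (Fin.last e).succAbove (Fin.last e).succAbove) = A := by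
              funext a b
              rw [Fin.succAbove_last]
              show B (Fin.castSucc a) (Fin.castSucc b) = A a b
              show w (Fin.castSucc a) (cs' (Fin.castSucc b)) = A a b
              rw [hw, hcs', Fin.snoc_castSucc, Fin.snoc_castSucc, hA]
              rfl
            have h3 : (-1 : R) ^ ((Fin.last e : ℕ) + (Fin.last e : ℕ)) = 1 :=
              Even.neg_one_pow ⟨(Fin.last e : ℕ), rfl⟩
            rw [h1, h2, ← hdet, h3, one_mul]
          · intro j _ hj
            obtain ⟨b, rfl⟩ := Fin.exists_castSucc_eq.mpr hj
            have hz0 : B (Fin.last e) (Fin.castSucc b) = 0 := by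
              show w (Fin.last e) (cs' (Fin.castSucc b)) = 0
              rw [hw, hcs', Fin.snoc_last, Fin.snoc_castSucc]
              exact hzc b
            rw [hz0]
            ring
        rw [mul_comm, ← hdetB]
        exact hB0
    have hPtop : ∀ m : M, ∃ u : Fin n → R, (∀ b, u (cs b) = 0) ∧ pi u = δ • m := by
      let P : Submodule R M :=
        { carrier := {m | ∃ u : Fin n → R, (∀ b, u (cs b) = 0) ∧ pi u = δ • m}
          zero_mem' := ⟨0, fun b => rfl, by rw [map_zero, smul_zero]⟩
          add_mem' := by
            rintro m1 m2 ⟨u1, hu1, hp1⟩ ⟨u2, hu2, hp2⟩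
            exact ⟨u1 + u2, fun b => by rw [Pi.add_apply, hu1 b, hu2 b, add_zero],
              by rw [map_add, hp1, hp2, smul_add]⟩
          smul_mem' := by
            rintro r m ⟨u, hu, hp⟩
            exact ⟨r • u, fun b => by rw [Pi.smul_apply, hu b, smul_zero],
              by rw [map_smul, hp, smul_comm]⟩ }
      have hle : Submodule.span R (Set.range s) ≤ P := by
        rw [Submodule.span_le]
        rintro _ ⟨c, rfl⟩
        by_cases hcr : ∃ b, cs b = c
        · obtain ⟨b, rfl⟩ := hcr
          refine ⟨δ • (Pi.single (cs b) 1 : Fin n → R) - ∑ a, A.adjugate b a • (v a : Fin n → R),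
            fun b' => ?_, ?_⟩
          · have h1 : (δ • (Pi.single (cs b) 1 : Fin n → R)) (cs b')
                = if b = b' then δ else 0 := by
              rw [Pi.smul_apply, smul_eq_mul]
              by_cases hbb : b = b'
              · subst hbb
                rw [Pi.single_eq_same, mul_one, if_pos rfl]
              · have hne : cs b' ≠ cs b := fun hcc => hbb (hcsinj hcc).symm
                rw [Pi.single_eq_of_ne hne, mul_zero, if_neg hbb]
            have h2 : (∑ a, A.adjugate b a • (v a : Fin n → R)) (cs b')
                = ∑ a, A.adjugate b a * A a b' := by
              rw [Finset.sum_apply]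
              refine Finset.sum_congr rfl fun a _ => ?_
              rw [Pi.smul_apply, smul_eq_mul]
              rfl
            have hadj : ∑ a, A.adjugate b a * A a b' = (A.adjugate * A) b b' :=
              (Matrix.mul_apply).symm
            have h3 : (A.adjugate * A) b b' = if b = b' then δ else 0 := by
              rw [Matrix.adjugate_mul, Matrix.smul_apply, Matrix.one_apply, ← hdet,
                smul_eq_mul]
              by_cases hbb : b = b'
              · rw [if_pos hbb, if_pos hbb, mul_one]
              · rw [if_neg hbb, if_neg hbb, mul_zero]
            rw [Pi.sub_apply, h1, h2, hadj, h3, sub_self]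
          · rw [map_sub, map_smul, hpisingle]
            have hz : pi (∑ a, A.adjugate b a • (v a : Fin n → R)) = 0 := by
              rw [map_sum]
              refine Finset.sum_eq_zero fun a _ => ?_
              rw [map_smul, LinearMap.mem_ker.mp (v a).2, smul_zero]
            rw [hz, sub_zero]
        · push_neg at hcr
          exact ⟨δ • (Pi.single c 1 : Fin n → R), fun b => by
              rw [Pi.smul_apply, Pi.single_eq_of_ne (hcr b), smul_zero],
            by rw [map_smul, hpisingle]⟩
      intro m
      exact hle (hs ▸ Submodule.mem_top : m ∈ Submodule.span R (Set.range s))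
    have hkey : ∀ (m : M) (u u' : Fin n → R), (∀ b, u (cs b) = 0) → pi u = δ • m →
        (∀ b, u' (cs b) = 0) → pi u' = δ • m → δ • u = δ • u' := by
      intro m u u' hu hpu hu' hpu'
      have hz : pi (u - u') = 0 := by rw [map_sub, hpu, hpu', sub_self]
      have hzc : ∀ b, (u - u') (cs b) = 0 := fun b => by
        rw [Pi.sub_apply, hu b, hu' b, sub_zero]
      funext c
      have := huniq (u - u') hz hzc c
      rw [Pi.sub_apply, mul_sub, sub_eq_zero] at this
      rw [Pi.smul_apply, Pi.smul_apply, smul_eq_mul, smul_eq_mul]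
      exact this
    choose uw hw1 hw2 using hPtop
    have hFadd : ∀ m1 m2 : M, δ • uw (m1 + m2) = δ • uw m1 + δ • uw m2 := by
      intro m1 m2
      have hwit : ∀ b, (uw m1 + uw m2) (cs b) = 0 := fun b => by
        rw [Pi.add_apply, hw1 m1 b, hw1 m2 b, add_zero]
      have hwit2 : pi (uw m1 + uw m2) = δ • (m1 + m2) := by
        rw [map_add, hw2, hw2, smul_add]
      rw [hkey (m1+m2) (uw (m1+m2)) (uw m1 + uw m2) (hw1 _) (hw2 _) hwit hwit2, smul_add]
    have hFsmul : ∀ (r : R) (m : M), δ • uw (r • m) = r • (δ • uw m) := by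
      intro r m
      have hwit : ∀ b, (r • uw m) (cs b) = 0 := fun b => by
        rw [Pi.smul_apply, hw1 m b, smul_zero]
      have hwit2 : pi (r • uw m) = δ • (r • m) := by rw [map_smul, hw2 m, smul_comm]
      rw [hkey (r • m) (uw (r • m)) (r • uw m) (hw1 _) (hw2 _) hwit hwit2, smul_comm]
    let G : M →ₗ[R] (Fin n → R) :=
      { toFun := fun m => δ • uw m
        map_add' := hFadd
        map_smul' := fun r m => by rw [RingHom.id_apply]; exact hFsmul r m }
    have hGpi : ∀ m, pi (G m) = (δ * δ) • m := by
      intro m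
      show pi (δ • uw m) = (δ * δ) • m
      rw [map_smul, hw2 m, smul_smul]
    have hδ2J : δ * δ ∈ J := by
      refine ⟨Fin n, inferInstance, fun c => (LinearMap.proj c).comp G, s, fun m => ?_⟩
      have hsum : ∑ c, ((LinearMap.proj c).comp G) m • s c = pi (G m) := by
        rw [hpi]
        rfl
      rw [hsum, hGpi m]
    rcases hsimple J hJstable with hJ | hJ
    · exfalso
      rw [hJ] at hδ2J
      exact hδ0 (hred δ ((Submodule.mem_bot R).mp hδ2J))
    · have h1J : (1 : R) ∈ J := hJ ▸ Submodule.mem_top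
      obtain ⟨ι, _, f, x, hfx⟩ := h1J
      rw [Module.projective_def']
      refine ⟨∑ i : ι, (Finsupp.lsingle (x i)).comp (f i), ?_⟩
      refine LinearMap.ext fun m => ?_
      simp only [LinearMap.comp_apply, LinearMap.sum_apply, Finsupp.lsingle_apply,
        LinearMap.id_apply, map_sum, Finsupp.linearCombination_single, id_eq]
      rw [← hfx m, one_smul]

def qlift {R : Type u} [CommRing R] {M : Type v} [AddCommGroup M] [Module R M]
    (N : Submodule R M) (g : M →+ M) (h : ∀ m ∈ N, g m ∈ N) : (M ⧸ N) →+ (M ⧸ N) where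
  toFun := fun z => Quotient.liftOn' z (fun m => Submodule.Quotient.mk (g m)) (by
    intro a b hab
    have hab' : a - b ∈ N := by
      rwa [Submodule.quotientRel_def] at hab
    refine (Submodule.Quotient.eq N).mpr ?_
    rw [← map_sub]
    exact h _ hab')
  map_zero' := by
    show Submodule.Quotient.mk (g 0) = 0
    rw [map_zero]; rfl
  map_add' := by
    intro a b
    refine Quotient.inductionOn₂' a b ?_
    intro x y
    show Submodule.Quotient.mk (g (x + y))
      = Submodule.Quotient.mk (g x) + Submodule.Quotient.mk (g y)
    rw [map_add, ← Submodule.Quotient.mk_add]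

theorem stmt12' (R : Type u) [CommRing R] [Nontrivial R]
    (d : ℕ → R →+ R)
    (h0 : ∀ r : R, d 0 r = r)
    (hmul : ∀ (i : ℕ) (r s : R),
      d i (r * s) = ∑ p ∈ Finset.HasAntidiagonal.antidiagonal i, d p.1 r * d p.2 s)
    (hcomp : ∀ (i j : ℕ) (r : R), d i (d j r) = (i + j).choose i • d (i + j) r)
    (hsimple : ∀ I : Ideal R, (∀ (i : ℕ), ∀ x ∈ I, d i x ∈ I) → I = ⊥ ∨ I = ⊤)
    (M : Type v) [AddCommGroup M] [Module R M] [Module.Finite R M]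
    (Dm : ℕ → M →+ M)
    (hDm0 : ∀ m : M, Dm 0 m = m)
    (hDmsmul : ∀ (i : ℕ) (r : R) (m : M),
      Dm i (r • m) = ∑ p ∈ Finset.HasAntidiagonal.antidiagonal i, d p.1 r • Dm p.2 m)
    (hDmcomp : ∀ (i j : ℕ) (m : M), Dm i (Dm j m) = (i + j).choose i • Dm (i + j) m)
    (N : Submodule R M) (hN : ∀ (i : ℕ), ∀ m ∈ N, Dm i m ∈ N) :
    Module.Projective R N ∧ Module.Projective R (M ⧸ N) := by
  classical
  -- quotient connection
  let Dq : ℕ → (M ⧸ N) →+ (M ⧸ N) := fun i => qlift N (Dm i) (hN i)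
  have hDqmk : ∀ (i : ℕ) (m : M),
      Dq i (Submodule.Quotient.mk m) = Submodule.Quotient.mk (Dm i m) := fun i m => rfl
  have hmkQcoe : ∀ m : M, N.mkQ m = Submodule.Quotient.mk m := fun m => rfl
  have hDq0 : ∀ z : M ⧸ N, Dq 0 z = z := by
    intro z
    obtain ⟨m, rfl⟩ := Submodule.Quotient.mk_surjective N z
    rw [hDqmk, hDm0]
  have hDqsmul : ∀ (i : ℕ) (r : R) (z : M ⧸ N),
      Dq i (r • z) = ∑ p ∈ Finset.HasAntidiagonal.antidiagonal i, d p.1 r • Dq p.2 z := by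
    intro i r z
    obtain ⟨m, rfl⟩ := Submodule.Quotient.mk_surjective N z
    rw [← Submodule.Quotient.mk_smul, hDqmk, hDmsmul, ← hmkQcoe, map_sum]
    refine Finset.sum_congr rfl fun p _ => ?_
    rw [map_smul]
    rfl
  have hDqcomp : ∀ (i j : ℕ) (z : M ⧸ N),
      Dq i (Dq j z) = (i + j).choose i • Dq (i + j) z := by
    intro i j z
    obtain ⟨m, rfl⟩ := Submodule.Quotient.mk_surjective N z
    rw [hDqmk, hDqmk, hDmcomp, ← hmkQcoe, map_nsmul]
    rfl
  haveI hMQfin : Module.Finite R (M ⧸ N) :=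
    Module.Finite.of_surjective N.mkQ (Submodule.mkQ_surjective N)
  have hQproj : Module.Projective R (M ⧸ N) :=
    idm_projective d h0 hmul hcomp hsimple Dq hDq0 hDqsmul hDqcomp
  haveI := hQproj
  -- splitting
  obtain ⟨σ, hσ⟩ := Module.projective_lifting_property N.mkQ
    (LinearMap.id (R := R) (M := M ⧸ N)) (Submodule.mkQ_surjective N)
  have hσ' : ∀ z : M ⧸ N, N.mkQ (σ z) = z := fun z => congrArg (fun g => g z) hσ
  have hρmem : ∀ m : M, m - σ (N.mkQ m) ∈ N := by
    intro m
    rw [← Submodule.Quotient.mk_eq_zero N, ← hmkQcoe, map_sub, hσ', sub_self]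
  let ρ : M →ₗ[R] N := LinearMap.codRestrict N (LinearMap.id - σ ∘ₗ N.mkQ) hρmem
  have hρsurj : Function.Surjective ρ := by
    rintro ⟨x, hx⟩
    refine ⟨x, Subtype.ext ?_⟩
    show x - σ (N.mkQ x) = x
    have : N.mkQ x = 0 := by
      rw [hmkQcoe, Submodule.Quotient.mk_eq_zero]
      exact hx
    rw [this, map_zero, sub_zero]
  haveI hNfin : Module.Finite R N := Module.Finite.of_surjective ρ hρsurj
  -- connection on N
  let Dn : ℕ → N →+ N := fun i =>
    { toFun := fun x => ⟨Dm i x, hN i x x.2⟩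
      map_zero' := Subtype.ext (by simp)
      map_add' := fun a b => Subtype.ext (by
        show Dm i ((a : M) + b) = Dm i a + Dm i b
        rw [map_add]) }
  have hDn0 : ∀ x : N, Dn 0 x = x := fun x => Subtype.ext (hDm0 x)
  have hDnsmul : ∀ (i : ℕ) (r : R) (x : N),
      Dn i (r • x) = ∑ p ∈ Finset.HasAntidiagonal.antidiagonal i, d p.1 r • Dn p.2 x := by
    intro i r x
    refine Subtype.ext ?_
    show Dm i ((r • x : N) : M) = ((∑ p ∈ Finset.HasAntidiagonal.antidiagonal i, d p.1 r • Dn p.2 x : N) : M)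
    rw [Submodule.coe_smul, hDmsmul]
    rw [Submodule.coe_sum]
    refine Finset.sum_congr rfl fun p _ => ?_
    rw [Submodule.coe_smul]
    rfl
  have hDncomp : ∀ (i j : ℕ) (x : N),
      Dn i (Dn j x) = (i + j).choose i • Dn (i + j) x := by
    intro i j x
    refine Subtype.ext ?_
    show Dm i (Dm j x) = (((i + j).choose i • Dn (i + j) x : N) : M)
    rw [hDmcomp]
    push_cast
    rfl
  exact ⟨idm_projective d h0 hmul hcomp hsimple Dn hDn0 hDnsmul hDncomp, hQproj⟩





/-- **Proposition 5.4 of Nagy–Szamuely** (generalizing André), subquotient version: any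
ID-submodule `N` of a finitely generated iterative differential module `M` over a simple
iterative differential ring `(R, d)` is projective, and so is the quotient `M/N`. -/
theorem stmt12 (R : Type u) [CommRing R] [Nontrivial R]
    (d : ℕ → R →+ R)
    (h0 : ∀ r : R, d 0 r = r)
    (hmul : ∀ (i : ℕ) (r s : R),
      d i (r * s) = ∑ p ∈ Finset.HasAntidiagonal.antidiagonal i, d p.1 r * d p.2 s)
    (hcomp : ∀ (i j : ℕ) (r : R), d i (d j r) = (i + j).choose i • d (i + j) r)
    (hsimple : ∀ I : Ideal R, (∀ (i : ℕ), ∀ x ∈ I, d i x ∈ I) → I = ⊥ ∨ I = ⊤)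
    (M : Type v) [AddCommGroup M] [Module R M] [Module.Finite R M]
    (Dm : ℕ → M →+ M)
    (hDm0 : ∀ m : M, Dm 0 m = m)
    (hDmsmul : ∀ (i : ℕ) (r : R) (m : M),
      Dm i (r • m) = ∑ p ∈ Finset.HasAntidiagonal.antidiagonal i, d p.1 r • Dm p.2 m)
    (hDmcomp : ∀ (i j : ℕ) (m : M), Dm i (Dm j m) = (i + j).choose i • Dm (i + j) m)
    (N : Submodule R M) (hN : ∀ (i : ℕ), ∀ m ∈ N, Dm i m ∈ N) :
    Module.Projective R N ∧ Module.Projective R (M ⧸ N) := by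
  exact stmt12' R d h0 hmul hcomp hsimple M Dm hDm0 hDmsmul hDmcomp N hN
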